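/- Let n, m be positive integers, w ∈ ℝⁿ a probability vector, c ∈ ℝᵐ, ε > 0 and M₁ ≥ 0. For each i ∈ {1,…,n} and j ∈ {1,…,m}, let v_{ij} : ℝ → ℝ be twice continuously differentiable and let g_{ij} be differentiable on an open interval containing [c_j, c_j + 1] with v_{ij}'(g_{ij}(p)) = p, 0 ≤ g_{ij}(p) ≤ M₁ and v_{ij}''(g_{ij}(p)) ≤ −ε for all p ∈ [c_j, c_j + 1]. Set F(p) = Σⱼ Σᵢ wᵢ · g_{ij}(p_j) · (p_j − c_j) and let p* maximize F over the box K = Πⱼ [c_j, c_j + 1]. Then with M = √m · (M₁ + 1/ε), for every p ∈ K one has F(p*) − F(p) ≤ M · ‖p − p*‖, where ‖·‖ is the Euclidean norm on ℝᵐ. -/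

import Mathlib

/-- If `deriv v (g p) = p` on an open interval, `g` is differentiable there, and the
second derivative of `v` at `g q` is `≤ -ε`, then `|deriv g q| ≤ 1/ε`. -/
lemma aux_deriv_g_bound (v g : ℝ → ℝ) (ε a b : ℝ) (hε : 0 < ε) (hv : ContDiff ℝ 2 v)
    (hdiff : ∀ p ∈ Set.Ioo a b, DifferentiableAt ℝ g p)
    (hinv : ∀ p ∈ Set.Ioo a b, deriv v (g p) = p)
    (q : ℝ) (hq : q ∈ Set.Ioo a b) (hreg : deriv (deriv v) (g q) ≤ -ε) :
    |deriv g q| ≤ 1 / ε := by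
  have hdv : Differentiable ℝ (deriv v) := by
    have h2 : ContDiff ℝ ((1 : WithTop ℕ∞) + 1) v := by norm_num at hv ⊢; exact hv
    rw [contDiff_succ_iff_deriv] at h2
    exact h2.2.2.differentiable one_ne_zero
  set D := deriv (deriv v) (g q) with hD
  have H1 : HasDerivAt (deriv v) D (g q) := (hdv (g q)).hasDerivAt
  have H2 : HasDerivAt g (deriv g q) q := (hdiff q hq).hasDerivAt
  have Hcomp : HasDerivAt (fun p => deriv v (g p)) (D * deriv g q) q := H1.comp q H2
  have heq : (fun p => (p : ℝ)) =ᶠ[nhds q] (fun p => deriv v (g p)) := by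
    filter_upwards [Ioo_mem_nhds hq.1 hq.2] with x hx
    exact (hinv x hx).symm
  have Hid : HasDerivAt (fun p => (p : ℝ)) (D * deriv g q) q := Hcomp.congr_of_eventuallyEq heq
  have hone : D * deriv g q = 1 := Hid.unique (hasDerivAt_id q)
  have hDneg : D < 0 := lt_of_le_of_lt hreg (by linarith)
  have hDne : D ≠ 0 := ne_of_lt hDneg
  have hg' : deriv g q = D⁻¹ := by field_simp at hone ⊢; linarith [hone]
  rw [hg', abs_inv]
  rw [one_div]
  apply inv_anti₀ hε
  rw [abs_of_neg hDneg]
  linarith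

/-- Deterministic form of the paper's Proposition 3.2: the revenue loss from using a
sub-optimal price `p` instead of the optimal price `p*` is at most
`√m * (M₁ + 1/ε) * ‖p - p*‖` (Euclidean norm). -/
theorem revenue_loss_lipschitz
    (n m : ℕ) (hn : 0 < n) (hm : 0 < m)
    (w : Fin n → ℝ) (hw : ∀ i, 0 ≤ w i) (hw1 : ∑ i, w i = 1)
    (c : Fin m → ℝ) (ε M₁ : ℝ) (hε : 0 < ε) (hM₁ : 0 ≤ M₁)
    (v : Fin n → Fin m → ℝ → ℝ) (hv : ∀ i j, ContDiff ℝ 2 (v i j))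
    (g : Fin n → Fin m → ℝ → ℝ)
    (hg : ∀ i j, ∃ a b : ℝ, a < c j ∧ c j + 1 < b ∧
      (∀ p ∈ Set.Ioo a b, DifferentiableAt ℝ (g i j) p) ∧
      (∀ p ∈ Set.Ioo a b, deriv (v i j) (g i j p) = p))
    (hgbound : ∀ i j, ∀ p ∈ Set.Icc (c j) (c j + 1), 0 ≤ g i j p ∧ g i j p ≤ M₁)
    (hreg : ∀ i j, ∀ p ∈ Set.Icc (c j) (c j + 1),
      iteratedDeriv 2 (v i j) (g i j p) ≤ -ε)
    (F : EuclideanSpace ℝ (Fin m) → ℝ)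
    (hF : F = fun p => ∑ j, ∑ i, w i * g i j (p j) * (p j - c j))
    (K : Set (EuclideanSpace ℝ (Fin m)))
    (hK : K = {p : EuclideanSpace ℝ (Fin m) | ∀ j, p j ∈ Set.Icc (c j) (c j + 1)})
    (pstar : EuclideanSpace ℝ (Fin m)) (hpstar : pstar ∈ K)
    (hmax : ∀ p ∈ K, F p ≤ F pstar)
    (M : ℝ) (hM : M = Real.sqrt m * (M₁ + 1 / ε)) :
    ∀ p ∈ K, F pstar - F p ≤ M * ‖p - pstar‖ := by
  subst hF hK hM
  intro p hp
  set L : ℝ := M₁ + 1 / ε with hL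
  have hLpos : 0 ≤ L := by positivity
  -- bound on |deriv (g i j) q| for q in the price interval
  have hgderiv : ∀ (i : Fin n) (j : Fin m), ∀ q ∈ Set.Icc (c j) (c j + 1),
      HasDerivAt (g i j) (deriv (g i j) q) q ∧ |deriv (g i j) q| ≤ 1 / ε := by
    intro i j q hq
    obtain ⟨a, b, ha, hb, hdiff, hinv⟩ := hg i j
    have hqab : q ∈ Set.Ioo a b := ⟨lt_of_lt_of_le ha hq.1, lt_of_le_of_lt hq.2 hb⟩
    have hreg' : deriv (deriv (v i j)) (g i j q) ≤ -ε := by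
      have := hreg i j q hq
      simpa [iteratedDeriv_succ, iteratedDeriv_one] using this
    exact ⟨(hdiff q hqab).hasDerivAt,
      aux_deriv_g_bound (v i j) (g i j) ε a b hε (hv i j) hdiff hinv q hqab hreg'⟩
  -- per-coordinate Lipschitz estimate
  have key : ∀ j : Fin m,
      |(∑ i, w i * g i j (pstar j) * (pstar j - c j)) -
        (∑ i, w i * g i j (p j) * (p j - c j))| ≤ L * |pstar j - p j| := by
    intro j
    set h : ℝ → ℝ := fun q => ∑ i, w i * g i j q * (q - c j) with hh
    set h' : ℝ → ℝ := fun q => ∑ i, w i * (deriv (g i j) q * (q - c j) + g i j q) with hh'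
    have hder : ∀ q ∈ Set.Icc (c j) (c j + 1),
        HasDerivWithinAt h (h' q) (Set.Icc (c j) (c j + 1)) q := by
      intro q hq
      have : HasDerivAt h (∑ i, (w i * deriv (g i j) q * (q - c j) + w i * g i j q * 1)) q := by
        apply HasDerivAt.fun_sum
        intro i _
        exact (((hgderiv i j q hq).1.const_mul (w i)).mul
          ((hasDerivAt_id q).sub_const (c j)))
      have heq : (∑ i, (w i * deriv (g i j) q * (q - c j) + w i * g i j q * 1)) = h' q := by
        simp only [hh']
        exact Finset.sum_congr rfl fun i _ => by ring
      rw [heq] at this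
      exact this.hasDerivWithinAt
    have hbound : ∀ q ∈ Set.Icc (c j) (c j + 1), ‖h' q‖ ≤ L := by
      intro q hq
      rw [Real.norm_eq_abs]
      calc |h' q| ≤ ∑ i, |w i * (deriv (g i j) q * (q - c j) + g i j q)| :=
            Finset.abs_sum_le_sum_abs _ _
        _ ≤ ∑ i, w i * L := by
            apply Finset.sum_le_sum
            intro i _
            rw [abs_mul, abs_of_nonneg (hw i)]
            apply mul_le_mul_of_nonneg_left _ (hw i)
            have h1 : |deriv (g i j) q * (q - c j) + g i j q| ≤
                |deriv (g i j) q| * |q - c j| + |g i j q| := by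
              calc _ ≤ |deriv (g i j) q * (q - c j)| + |g i j q| := abs_add_le _ _
                _ = _ := by rw [abs_mul]
            have h2 : |q - c j| ≤ 1 := by
              rw [abs_of_nonneg (by linarith [hq.1])]
              linarith [hq.2]
            have h3 : |g i j q| ≤ M₁ := by
              rw [abs_of_nonneg (hgbound i j q hq).1]
              exact (hgbound i j q hq).2
            have h4 := (hgderiv i j q hq).2
            have : |deriv (g i j) q| * |q - c j| ≤ (1 / ε) * 1 := by
              apply mul_le_mul h4 h2 (abs_nonneg _) (by positivity)
            rw [hL]
            calc |deriv (g i j) q * (q - c j) + g i j q| ≤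
                  |deriv (g i j) q| * |q - c j| + |g i j q| := h1
              _ ≤ (1 / ε) * 1 + M₁ := add_le_add this h3
              _ = M₁ + 1 / ε := by ring
        _ = L := by rw [← Finset.sum_mul, hw1, one_mul]
    have hps : pstar j ∈ Set.Icc (c j) (c j + 1) := hpstar j
    have hpj : p j ∈ Set.Icc (c j) (c j + 1) := hp j
    have := (convex_Icc (c j) (c j + 1)).norm_image_sub_le_of_norm_hasDerivWithin_le
      hder hbound hpj hps
    simpa [Real.norm_eq_abs] using this
  -- sum up
  have hsum : (∑ j, |pstar j - p j|) ≤ Real.sqrt m * ‖p - pstar‖ := by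
    have h1 : (∑ j, |pstar j - p j|) ^ 2 ≤ (m : ℝ) * ∑ j, |pstar j - p j| ^ 2 := by
      have := sq_sum_le_card_mul_sum_sq (s := (Finset.univ : Finset (Fin m)))
        (f := fun j => |pstar j - p j|)
      simpa using this
    have hnorm : ‖p - pstar‖ = Real.sqrt (∑ j, |pstar j - p j| ^ 2) := by
      rw [EuclideanSpace.norm_eq]
      congr 1
      refine Finset.sum_congr rfl fun j _ => ?_
      have : (p - pstar) j = p j - pstar j := rfl
      rw [this, Real.norm_eq_abs, sq_abs, sq_abs, ← neg_sub (pstar j) (p j)]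
      ring
    have hsq : 0 ≤ ∑ j, |pstar j - p j| ^ 2 := Finset.sum_nonneg fun j _ => sq_nonneg _
    have h2 : (∑ j, |pstar j - p j|) = Real.sqrt ((∑ j, |pstar j - p j|) ^ 2) :=
      (Real.sqrt_sq (Finset.sum_nonneg fun j _ => abs_nonneg _)).symm
    rw [h2, hnorm, ← Real.sqrt_mul (Nat.cast_nonneg m)]
    exact Real.sqrt_le_sqrt h1
  calc (∑ j, ∑ i, w i * g i j (pstar j) * (pstar j - c j)) -
        (∑ j, ∑ i, w i * g i j (p j) * (p j - c j))
      = ∑ j, ((∑ i, w i * g i j (pstar j) * (pstar j - c j)) -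
        (∑ i, w i * g i j (p j) * (p j - c j))) := by rw [Finset.sum_sub_distrib]
    _ ≤ ∑ j, |(∑ i, w i * g i j (pstar j) * (pstar j - c j)) -
        (∑ i, w i * g i j (p j) * (p j - c j))| :=
        Finset.sum_le_sum fun j _ => le_abs_self _
    _ ≤ ∑ j, L * |pstar j - p j| := Finset.sum_le_sum fun j _ => key j
    _ = L * ∑ j, |pstar j - p j| := by rw [Finset.mul_sum]
    _ ≤ L * (Real.sqrt m * ‖p - pstar‖) := mul_le_mul_of_nonneg_left hsum hLpos
    _ = Real.sqrt m * L * ‖p - pstar‖ := by ring
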